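/- Let m ≥ 2. Given the Hjelmslev construction data — a projective plane 𝒫 of order m; for each point p of 𝒫 an affine plane 𝒜_p of order m; for each line l of 𝒫 an orthogonal array 𝒪_l = OA(2, m+1, m) whose columns are labeled by the m+1 points of l; and for each incident point–line pair (p, l) a parallel class C(p,l) of 𝒜_p together with a bijective labeling of its m lines by the m symbols of 𝒪_l, such that distinct lines of 𝒫 through p are assigned distinct parallel classes of 𝒜_p — define the incidence structure ℋ whose points are pairs (p, a) with p a point of 𝒫 and a a point of 𝒜_p, whose lines are pairs (l, r) with l a line of 𝒫 and r a row of 𝒪_l, with (p, a) incident with (l, r) if and only if p lies on l and a lies on the line of C(p,l) labeled by the entry of 𝒪_l in row r and column p. Then ℋ, with point-neighbour relation (p,a) ∼ (p',a') iff p = p', line-neighbour relation (l,r) ∼ (l',r') iff l = l', and the quotient map φ(p,a) = p, φ(l,r) = l, is a 2-uniform (m,m) projective Hjelmslev plane. -/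

import Mathlib

/-- A projective plane: any two distinct points lie on a unique common line, any two distinct
lines meet in a unique point, and there are four points no three of which are collinear. -/
structure IsProjectivePlane {P L : Type} (I : P → L → Prop) : Prop where
  point_line : ∀ p q : P, p ≠ q → ∃! l : L, I p l ∧ I q l
  line_point : ∀ g h : L, g ≠ h → ∃! p : P, I p g ∧ I p h
  nondeg : ∃ a b c d : P, a ≠ b ∧ a ≠ c ∧ a ≠ d ∧ b ≠ c ∧ b ≠ d ∧ c ≠ d ∧
    (∀ l : L, ¬(I a l ∧ I b l ∧ I c l)) ∧ (∀ l : L, ¬(I a l ∧ I b l ∧ I d l)) ∧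
    (∀ l : L, ¬(I a l ∧ I c l ∧ I d l)) ∧ (∀ l : L, ¬(I b l ∧ I c l ∧ I d l))

/-- A projective plane has order `m` if every line is incident with exactly `m + 1` points. -/
def ProjOrder {P L : Type} (I : P → L → Prop) (m : ℕ) : Prop :=
  ∀ l : L, Nat.card {p : P // I p l} = m + 1

/-- An affine plane: any two distinct points lie on a unique common line, for every
non-incident point–line pair there is a unique line through the point disjoint from the
line, and there exist three non-collinear points. -/
structure IsAffinePlane {P L : Type} (I : P → L → Prop) : Prop where
  point_line : ∀ p q : P, p ≠ q → ∃! l : L, I p l ∧ I q l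
  playfair : ∀ (p : P) (l : L), ¬ I p l → ∃! g : L, I p g ∧ ∀ q : P, ¬(I q l ∧ I q g)
  nondeg : ∃ a b c : P, a ≠ b ∧ a ≠ c ∧ b ≠ c ∧ ∀ l : L, ¬(I a l ∧ I b l ∧ I c l)

/-- An affine plane has order `m` if every line is incident with exactly `m` points. -/
def AffOrder {P L : Type} (I : P → L → Prop) (m : ℕ) : Prop :=
  ∀ l : L, Nat.card {p : P // I p l} = m

/-- Two lines are parallel if they are equal or disjoint. -/
def Parallel {P L : Type} (I : P → L → Prop) (g h : L) : Prop :=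
  g = h ∨ ∀ p : P, ¬(I p g ∧ I p h)

/-- A parallel class: an equivalence class of lines under parallelism. -/
def IsParallelClass {P L : Type} (I : P → L → Prop) (Cl : Set L) : Prop :=
  ∃ g : L, Cl = {h : L | Parallel I g h}

/-- The (strength-2) orthogonal array property: for any two distinct columns, the map sending
a row to its pair of entries in those columns is a bijection onto `S × S`, i.e. each ordered
pair of symbols occurs in exactly one row. -/
def IsOrthArray2 {R Col S : Type} (F : R → Col → S) : Prop :=
  ∀ c₁ c₂ : Col, c₁ ≠ c₂ → Function.Bijective (fun r : R => (F r c₁, F r c₂))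
/-- Data for the (projective) Hjelmslev construction: a projective plane `𝒫` of order `m`;
for each point `p` of `𝒫` an affine plane `𝒜_p` of order `m`; for each line `l` of `𝒫` an
orthogonal array `OA(2, m+1, m)` whose columns are indexed by the `m+1` points of `l`; and
for each incident pair `(p, l)` a parallel class of `𝒜_p` whose `m` lines are labeled
bijectively by the `m` symbols of `𝒪_l`, such that distinct lines of `𝒫` through `p`
receive distinct parallel classes of `𝒜_p`. -/
structure PHData (m : ℕ) : Type 1 where
  /-- points of the projective plane `𝒫` -/
  Pt : Type
  /-- lines of the projective plane `𝒫` -/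
  Ln : Type
  /-- incidence of `𝒫` -/
  I : Pt → Ln → Prop
  proj : IsProjectivePlane I
  ord : ProjOrder I m
  /-- points of the affine plane `𝒜_p` -/
  APt : Pt → Type
  /-- lines of the affine plane `𝒜_p` -/
  ALn : Pt → Type
  /-- incidence of `𝒜_p` -/
  AI : ∀ p : Pt, APt p → ALn p → Prop
  aff : ∀ p : Pt, IsAffinePlane (AI p)
  aord : ∀ p : Pt, AffOrder (AI p) m
  /-- rows of the orthogonal array `𝒪_l` -/
  Row : Ln → Type
  /-- symbols of the orthogonal array `𝒪_l` -/
  Sym : Ln → Type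
  row_card : ∀ l : Ln, Nat.card (Row l) = m ^ 2
  sym_card : ∀ l : Ln, Nat.card (Sym l) = m
  /-- the orthogonal array `𝒪_l`, with columns labeled by the points of `l` -/
  O : ∀ l : Ln, Row l → {p : Pt // I p l} → Sym l
  oa : ∀ l : Ln, IsOrthArray2 (O l)
  /-- the labeling of the chosen parallel class `C(p, l)`: symbol `s` labels line `C p l h s` -/
  C : ∀ (p : Pt) (l : Ln), I p l → Sym l → ALn p
  C_inj : ∀ (p : Pt) (l : Ln) (h : I p l), Function.Injective (C p l h)
  C_class : ∀ (p : Pt) (l : Ln) (h : I p l), IsParallelClass (AI p) (Set.range (C p l h))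
  C_distinct : ∀ (p : Pt) (l₁ l₂ : Ln) (h₁ : I p l₁) (h₂ : I p l₂), l₁ ≠ l₂ →
    Set.range (C p l₁ h₁) ≠ Set.range (C p l₂ h₂)

/-- Points of the constructed structure `ℋ`: pairs `(p, a)` with `p` a point of `𝒫` and `a`
a point of `𝒜_p`. -/
def PHData.HPt {m : ℕ} (D : PHData m) : Type := Σ p : D.Pt, D.APt p

/-- Lines of the constructed structure `ℋ`: pairs `(l, r)` with `l` a line of `𝒫` and `r` a
row of `𝒪_l`. -/
def PHData.HLn {m : ℕ} (D : PHData m) : Type := Σ l : D.Ln, D.Row l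

/-- Incidence of `ℋ`: `(p, a)` is incident with `(l, r)` iff `p` lies on `l` and `a` lies on
the line of `C(p, l)` labeled by the entry of `𝒪_l` in row `r` and column `p`. -/
def PHData.HI {m : ℕ} (D : PHData m) : D.HPt → D.HLn → Prop :=
  fun x g => ∃ h : D.I x.1 g.1, D.AI x.1 x.2 (D.C x.1 g.1 h (D.O g.1 g.2 ⟨x.1, h⟩))

/-- Point-neighbour relation of `ℋ`: `(p, a) ∼ (p', a')` iff `p = p'`. -/
def PHData.nPt {m : ℕ} (D : PHData m) : D.HPt → D.HPt → Prop := fun x y => x.1 = y.1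

/-- Line-neighbour relation of `ℋ`: `(l, r) ∼ (l', r')` iff `l = l'`. -/
def PHData.nLn {m : ℕ} (D : PHData m) : D.HLn → D.HLn → Prop := fun g h => g.1 = h.1

/-- `ℋ = (I, nP, nL)` is a projective Hjelmslev plane with (specified) epimorphism
`(φP, φL)` onto the projective plane `I'`. -/
structure IsPHPlaneWith {P L P' L' : Type} (I : P → L → Prop)
    (nP : P → P → Prop) (nL : L → L → Prop)
    (I' : P' → L' → Prop) (φP : P → P') (φL : L → L') : Prop where
  nP_equiv : Equivalence nP
  nL_equiv : Equivalence nL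
  join : ∀ p q : P, ∃ l : L, I p l ∧ I q l
  meet : ∀ g h : L, ∃ p : P, I p g ∧ I p h
  line_nbr : ∀ g h : L, (∃ p q : P, p ≠ q ∧ I p g ∧ I p h ∧ I q g ∧ I q h) → nL g h
  point_nbr : ∀ p q : P, (∃ g h : L, g ≠ h ∧ I p g ∧ I q g ∧ I p h ∧ I q h) → nP p q
  target_proj : IsProjectivePlane I'
  φP_surj : Function.Surjective φP
  φL_surj : Function.Surjective φL
  incid_pres : ∀ (p : P) (l : L), I p l → I' (φP p) (φL l)
  nP_iff : ∀ p q : P, φP p = φP q ↔ nP p q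
  nL_iff : ∀ g h : L, φL g = φL h ↔ nL g h

/-- `ℋ = (I, nP, nL)` is an affine Hjelmslev plane with (specified) epimorphism
`(φP, φL)` onto the affine plane `I'`. -/
structure IsAHPlaneWith {P L P' L' : Type} (I : P → L → Prop)
    (nP : P → P → Prop) (nL : L → L → Prop)
    (I' : P' → L' → Prop) (φP : P → P') (φL : L → L') : Prop where
  nP_equiv : Equivalence nP
  nL_equiv : Equivalence nL
  join : ∀ p q : P, ∃ l : L, I p l ∧ I q l
  line_nbr : ∀ g h : L, (∃ p q : P, p ≠ q ∧ I p g ∧ I p h ∧ I q g ∧ I q h) → nL g h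
  target_aff : IsAffinePlane I'
  φP_surj : Function.Surjective φP
  φL_surj : Function.Surjective φL
  incid_pres : ∀ (p : P) (l : L), I p l → I' (φP p) (φL l)
  nP_iff : ∀ p q : P, φP p = φP q ↔ nP p q
  nL_iff : ∀ g h : L, φL g = φL h ↔ nL g h
  par : ∀ g h : L, (∀ p : P, ¬(I p g ∧ I p h)) → Parallel I' (φL g) (φL h)

/-- Each point of each line has exactly `t` neighbours on that line. -/
def NbrsOnLines {P L : Type} (I : P → L → Prop) (nP : P → P → Prop) (t : ℕ) : Prop :=
  ∀ (l : L) (p : P), I p l → Nat.card {q : P // I q l ∧ nP p q} = t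

/-- `ℋ` is a projective Hjelmslev plane (with associated projective plane unspecified). -/
def IsPHPlane {P L : Type} (I : P → L → Prop) (nP : P → P → Prop) (nL : L → L → Prop) :
    Prop :=
  ∃ (P' L' : Type) (I' : P' → L' → Prop) (φP : P → P') (φL : L → L'),
    IsPHPlaneWith I nP nL I' φP φL

/-- `ℋ` is a `(t, r)` projective Hjelmslev plane: each point of each line has exactly `t`
neighbours on that line, and the associated projective plane has order `r`. -/
def IsTRPHPlane {P L : Type} (I : P → L → Prop) (nP : P → P → Prop) (nL : L → L → Prop)
    (t r : ℕ) : Prop :=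
  ∃ (P' L' : Type) (I' : P' → L' → Prop) (φP : P → P') (φL : L → L'),
    IsPHPlaneWith I nP nL I' φP φL ∧ ProjOrder I' r ∧ NbrsOnLines I nP t

/-- `ℋ` is a `(t, r)` affine Hjelmslev plane: each point of each line has exactly `t`
neighbours on that line, and the associated affine plane has order `r`. -/
def IsTRAHPlane {P L : Type} (I : P → L → Prop) (nP : P → P → Prop) (nL : L → L → Prop)
    (t r : ℕ) : Prop :=
  ∃ (P' L' : Type) (I' : P' → L' → Prop) (φP : P → P') (φL : L → L'),
    IsAHPlaneWith I nP nL I' φP φL ∧ AffOrder I' r ∧ NbrsOnLines I nP t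

/-- The lines of the point-neighbourhood restriction at `p`: the nonempty intersections of
lines of `ℋ` with the neighbourhood of `p`, viewed as sets of points. -/
def NbrLines {P L : Type} (I : P → L → Prop) (nP : P → P → Prop) (p : P) : Set (Set P) :=
  {s : Set P | s.Nonempty ∧ ∃ g : L, s = {q : P | nP q p ∧ I q g}}

/-- `ℋ` is 2-uniform: every point-neighbourhood restriction is an ordinary affine plane, and
for each point, every line of the restriction is the restriction of the same number of lines
of `ℋ`. -/
def TwoUniform {P L : Type} (I : P → L → Prop) (nP : P → P → Prop) : Prop :=
  ∀ p : P,
    IsAffinePlane (fun (q : {q : P // nP q p}) (s : NbrLines I nP p) =>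
      (q : P) ∈ (s : Set P)) ∧
    ∃ n : ℕ, ∀ s : NbrLines I nP p,
      Nat.card {g : L // {q : P | nP q p ∧ I q g} = (s : Set P)} = n
/-- Data for the affine Hjelmslev construction: an affine plane `𝒜` of order `m`; for each
point `p` of `𝒜` an affine plane `𝒜_p` of order `m`; for each line `l` of `𝒜` an orthogonal
array `OA(2, m, m)` whose columns are indexed by the `m` points of `l`; and for each incident
pair `(p, l)` a parallel class of `𝒜_p` whose `m` lines are labeled bijectively by the `m`
symbols of `𝒪_l`, such that distinct lines of `𝒜` through `p` receive distinct parallel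
classes of `𝒜_p`. -/
structure AHData (m : ℕ) : Type 1 where
  /-- points of the base affine plane `𝒜` -/
  Pt : Type
  /-- lines of the base affine plane `𝒜` -/
  Ln : Type
  /-- incidence of `𝒜` -/
  I : Pt → Ln → Prop
  base : IsAffinePlane I
  ord : AffOrder I m
  /-- points of the affine plane `𝒜_p` -/
  APt : Pt → Type
  /-- lines of the affine plane `𝒜_p` -/
  ALn : Pt → Type
  /-- incidence of `𝒜_p` -/
  AI : ∀ p : Pt, APt p → ALn p → Prop
  aff : ∀ p : Pt, IsAffinePlane (AI p)
  aord : ∀ p : Pt, AffOrder (AI p) m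
  /-- rows of the orthogonal array `𝒪_l` -/
  Row : Ln → Type
  /-- symbols of the orthogonal array `𝒪_l` -/
  Sym : Ln → Type
  row_card : ∀ l : Ln, Nat.card (Row l) = m ^ 2
  sym_card : ∀ l : Ln, Nat.card (Sym l) = m
  /-- the orthogonal array `𝒪_l`, with columns labeled by the points of `l` -/
  O : ∀ l : Ln, Row l → {p : Pt // I p l} → Sym l
  oa : ∀ l : Ln, IsOrthArray2 (O l)
  /-- the labeling of the chosen parallel class `C(p, l)`: symbol `s` labels line `C p l h s` -/
  C : ∀ (p : Pt) (l : Ln), I p l → Sym l → ALn p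
  C_inj : ∀ (p : Pt) (l : Ln) (h : I p l), Function.Injective (C p l h)
  C_class : ∀ (p : Pt) (l : Ln) (h : I p l), IsParallelClass (AI p) (Set.range (C p l h))
  C_distinct : ∀ (p : Pt) (l₁ l₂ : Ln) (h₁ : I p l₁) (h₂ : I p l₂), l₁ ≠ l₂ →
    Set.range (C p l₁ h₁) ≠ Set.range (C p l₂ h₂)

/-- Points of the constructed structure `ℋ`: pairs `(p, a)` with `p` a point of `𝒜` and `a`
a point of `𝒜_p`. -/
def AHData.HPt {m : ℕ} (D : AHData m) : Type := Σ p : D.Pt, D.APt p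

/-- Lines of the constructed structure `ℋ`: pairs `(l, r)` with `l` a line of `𝒜` and `r` a
row of `𝒪_l`. -/
def AHData.HLn {m : ℕ} (D : AHData m) : Type := Σ l : D.Ln, D.Row l

/-- Incidence of `ℋ`: `(p, a)` is incident with `(l, r)` iff `p` lies on `l` and `a` lies on
the line of `C(p, l)` labeled by the entry of `𝒪_l` in row `r` and column `p`. -/
def AHData.HI {m : ℕ} (D : AHData m) : D.HPt → D.HLn → Prop :=
  fun x g => ∃ h : D.I x.1 g.1, D.AI x.1 x.2 (D.C x.1 g.1 h (D.O g.1 g.2 ⟨x.1, h⟩))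

/-- Point-neighbour relation of `ℋ`: `(p, a) ∼ (p', a')` iff `p = p'`. -/
def AHData.nPt {m : ℕ} (D : AHData m) : D.HPt → D.HPt → Prop := fun x y => x.1 = y.1

/-- Line-neighbour relation of `ℋ`: `(l, r) ∼ (l', r')` iff `l = l'`. -/
def AHData.nLn {m : ℕ} (D : AHData m) : D.HLn → D.HLn → Prop := fun g h => g.1 = h.1

section Helpers

variable {P L : Type} {I : P → L → Prop}

lemma card_two_exists {α : Type} {m : ℕ} (h : Nat.card α = m) (hm : 2 ≤ m) :
    ∃ a b : α, a ≠ b := by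
  have : Nontrivial α := by
    by_contra hn
    rw [not_nontrivial_iff_subsingleton] at hn
    rcases isEmpty_or_nonempty α with he | hne
    · rw [Nat.card_of_isEmpty] at h; omega
    · have := Nat.card_unique (α := α); omega
  exact exists_pair_ne α

lemma card_nonempty {α : Type} {m : ℕ} (h : Nat.card α = m) (hm : 1 ≤ m) :
    Nonempty α := by
  have : 0 < Nat.card α := by omega
  exact (Nat.card_pos_iff.mp this).1

lemma card_finite {α : Type} {m : ℕ} (h : Nat.card α = m) (hm : 1 ≤ m) :
    Finite α := by
  have : 0 < Nat.card α := by omega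
  exact (Nat.card_pos_iff.mp this).2

/-- two distinct points lie on at most one line (affine or projective `point_line`). -/
lemma line_eq_of_two_points (hU : ∀ p q : P, p ≠ q → ∃! l : L, I p l ∧ I q l)
    {p q : P} {g h : L} (hpq : p ≠ q) (h1 : I p g) (h2 : I q g) (h3 : I p h) (h4 : I q h) :
    g = h := by
  obtain ⟨l, -, hl⟩ := hU p q hpq
  rw [hl g ⟨h1, h2⟩, hl h ⟨h3, h4⟩]

namespace IsAffinePlane

variable (hA : IsAffinePlane I)

lemma parallel_symm {g h : L} (hp : Parallel I g h) : Parallel I h g := by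
  rcases hp with rfl | hd
  · exact Or.inl rfl
  · exact Or.inr fun p hp => hd p ⟨hp.2, hp.1⟩

include hA in
lemma parallel_trans {g h k : L} (h1 : Parallel I g h) (h2 : Parallel I h k) :
    Parallel I g k := by
  rcases h1 with rfl | hd1
  · exact h2
  rcases h2 with rfl | hd2
  · exact Or.inr hd1
  by_cases hgk : g = k
  · exact Or.inl hgk
  refine Or.inr fun p hp => ?_
  have hph : ¬ I p h := fun hh => hd1 p ⟨hp.1, hh⟩
  obtain ⟨l, -, hl⟩ := hA.playfair p h hph
  have e1 : g = l := hl g ⟨hp.1, fun q hq => hd1 q ⟨hq.2, hq.1⟩⟩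
  have e2 : k = l := hl k ⟨hp.2, fun q hq => hd2 q ⟨hq.1, hq.2⟩⟩
  exact hgk (e1.trans e2.symm)

include hA in
lemma class_eq_of_parallel {g h : L} (hp : Parallel I g h) :
    {k : L | Parallel I g k} = {k : L | Parallel I h k} := by
  ext k
  constructor
  · exact fun hk => hA.parallel_trans (parallel_symm hp) hk
  · exact fun hk => hA.parallel_trans hp hk

include hA in
lemma class_eq_of_mem {Cl Cl' : Set L} (h1 : IsParallelClass I Cl)
    (h2 : IsParallelClass I Cl') {l : L} (hl : l ∈ Cl) (hl' : l ∈ Cl') : Cl = Cl' := by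
  obtain ⟨g, rfl⟩ := h1
  obtain ⟨g', rfl⟩ := h2
  rw [hA.class_eq_of_parallel hl, hA.class_eq_of_parallel hl']

include hA in
/-- through each point there is a member of each parallel class -/
lemma exists_mem_class_through {Cl : Set L} (hC : IsParallelClass I Cl) (a : P) :
    ∃ l ∈ Cl, I a l := by
  obtain ⟨g, rfl⟩ := hC
  by_cases hag : I a g
  · exact ⟨g, Or.inl rfl, hag⟩
  · obtain ⟨l, ⟨hal, hdis⟩, -⟩ := hA.playfair a g hag
    exact ⟨l, Or.inr fun q hq => hdis q ⟨hq.1, hq.2⟩, hal⟩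

include hA in
/-- a line not through a given point -/
lemma exists_line_missing (a : P) : ∃ l : L, ¬ I a l := by
  obtain ⟨b, c, d, hbc, hbd, hcd, hncol⟩ := hA.nondeg
  obtain ⟨lcd, ⟨h1, h2⟩, -⟩ := hA.point_line c d hcd
  obtain ⟨lbc, ⟨h3, h4⟩, -⟩ := hA.point_line b c hbc
  obtain ⟨lbd, ⟨h5, h6⟩, -⟩ := hA.point_line b d hbd
  by_cases e1 : I a lbc
  · by_cases e2 : I a lbd
    · have hab : a = b := by
        by_contra hab
        have : lbc = lbd := line_eq_of_two_points hA.point_line hab e1 h3 e2 h5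
        exact hncol lbd ⟨this ▸ h3, this ▸ h4, h6⟩
      refine ⟨lcd, fun hacd => hncol lcd ⟨hab ▸ hacd, h1, h2⟩⟩
    · exact ⟨lbd, e2⟩
  · exact ⟨lbc, e1⟩

include hA in
lemma exists_line_through (a : P) : ∃ l : L, I a l := by
  obtain ⟨b, c, _, hbc, -⟩ := hA.nondeg
  by_cases hab : a = b
  · obtain ⟨l, ⟨h1, -⟩, -⟩ := hA.point_line b c hbc
    exact ⟨l, hab ▸ h1⟩
  · obtain ⟨l, ⟨h1, -⟩, -⟩ := hA.point_line a b hab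
    exact ⟨l, h1⟩

end IsAffinePlane

namespace IsProjectivePlane

variable (hP : IsProjectivePlane I)

include hP in
lemma exists_line_missing (a : P) : ∃ l : L, ¬ I a l := by
  obtain ⟨b, c, d, e, hbc, hbd, -, hcd, -, -, hncol, -, -, -⟩ := hP.nondeg
  obtain ⟨lcd, ⟨h1, h2⟩, -⟩ := hP.point_line c d hcd
  obtain ⟨lbc, ⟨h3, h4⟩, -⟩ := hP.point_line b c hbc
  obtain ⟨lbd, ⟨h5, h6⟩, -⟩ := hP.point_line b d hbd
  by_cases e1 : I a lbc
  · by_cases e2 : I a lbd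
    · have hab : a = b := by
        by_contra hab
        have : lbc = lbd := line_eq_of_two_points hP.point_line hab e1 h3 e2 h5
        exact hncol lbd ⟨this ▸ h3, this ▸ h4, h6⟩
      refine ⟨lcd, fun hacd => hncol lcd ⟨hab ▸ hacd, h1, h2⟩⟩
    · exact ⟨lbd, e2⟩
  · exact ⟨lbc, e1⟩

end IsProjectivePlane

end Helpers

section Cards

variable {P L : Type} {I : P → L → Prop} {m : ℕ}

lemma card_ne {β : Type} [Finite β] (b : β) :
    Nat.card {x : β // x ≠ b} = Nat.card β - 1 := by
  classical
  have he : Nat.card β = Nat.card {x : β // x = b} + Nat.card {x : β // x ≠ b} := by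
    rw [← Nat.card_sum]
    exact Nat.card_congr (Equiv.sumCompl (fun x => x = b)).symm
  have h1 : Nat.card {x : β // x = b} = 1 :=
    Nat.card_eq_one_iff_unique.mpr ⟨⟨fun x y => Subtype.ext (x.2.trans y.2.symm)⟩, ⟨b, rfl⟩⟩
  omega

lemma exists_ne_of_card {α : Type} {n : ℕ} (h : Nat.card α = n) (hn : 2 ≤ n) (c : α) :
    ∃ c' : α, c' ≠ c := by
  obtain ⟨a, b, hab⟩ := card_two_exists h hn
  by_cases hac : a = c
  · exact ⟨b, fun hbc => hab (hac.trans hbc.symm)⟩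
  · exact ⟨a, hac⟩

lemma IsProjectivePlane.lines_through_card (hP : IsProjectivePlane I)
    (hord : ProjOrder I m) (p : P) : Nat.card {l : L // I p l} = m + 1 := by
  obtain ⟨l₀, hl₀⟩ := hP.exists_line_missing p
  have hne : ∀ l : {l : L // I p l}, l.1 ≠ l₀ := fun l h => hl₀ (h ▸ l.2)
  choose f hf using fun l : {l : L // I p l} => (hP.line_point l.1 l₀ (hne l)).exists
  set F : {l : L // I p l} → {q : P // I q l₀} := fun l => ⟨f l, (hf l).2⟩ with hF
  have hinj : Function.Injective F := by
    intro l₁ l₂ h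
    have hq : f l₁ = f l₂ := congrArg Subtype.val h
    have hqp : f l₁ ≠ p := fun e => hl₀ (e ▸ (hf l₁).2)
    exact Subtype.ext (line_eq_of_two_points hP.point_line (Ne.symm hqp)
      l₁.2 (hf l₁).1 l₂.2 (hq ▸ (hf l₂).1))
  have hsurj : Function.Surjective F := by
    rintro ⟨q, hq⟩
    have hpq : p ≠ q := fun e => hl₀ (e ▸ hq)
    obtain ⟨l, ⟨hpl, hql⟩, -⟩ := hP.point_line p q hpq
    refine ⟨⟨l, hpl⟩, Subtype.ext ?_⟩
    by_contra hne2
    have hll₀ : l = l₀ := line_eq_of_two_points hP.point_line hne2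
      (hf ⟨l, hpl⟩).1 hql (hf ⟨l, hpl⟩).2 hq
    exact hne ⟨l, hpl⟩ hll₀
  exact (Nat.card_eq_of_bijective F ⟨hinj, hsurj⟩).trans (hord l₀)

lemma IsAffinePlane.lines_through_card (hA : IsAffinePlane I)
    (haord : AffOrder I m) (hm : 1 ≤ m) (a : P) :
    Nat.card {l : L // I a l} = m + 1 := by
  classical
  obtain ⟨l₀, hl₀⟩ := hA.exists_line_missing a
  set pr : {l : L // I a l} → Prop := fun l => ∃ q, I q l.1 ∧ I q l₀ with hpr
  have hfin₀ : Finite {q : P // I q l₀} := card_finite (haord l₀) hm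
  choose f hf using fun x : {l : {l : L // I a l} // pr l} => x.2
  set F : {l : {l : L // I a l} // pr l} → {q : P // I q l₀} := fun x => ⟨f x, (hf x).2⟩
  have hinj : Function.Injective F := by
    intro x₁ x₂ h
    have hq : f x₁ = f x₂ := congrArg Subtype.val h
    have hqa : f x₁ ≠ a := fun e => hl₀ (e ▸ (hf x₁).2)
    exact Subtype.ext (Subtype.ext (line_eq_of_two_points hA.point_line (Ne.symm hqa)
      x₁.1.2 (hf x₁).1 x₂.1.2 (hq ▸ (hf x₂).1)))
  have hsurj : Function.Surjective F := by
    rintro ⟨q, hq⟩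
    have haq : a ≠ q := fun e => hl₀ (e ▸ hq)
    obtain ⟨l, ⟨hal, hql⟩, -⟩ := hA.point_line a q haq
    refine ⟨⟨⟨l, hal⟩, ⟨q, hql, hq⟩⟩, Subtype.ext ?_⟩
    by_contra hne2
    have hll₀ : l = l₀ := line_eq_of_two_points hA.point_line hne2
      (hf ⟨⟨l, hal⟩, ⟨q, hql, hq⟩⟩).1 hql (hf ⟨⟨l, hal⟩, ⟨q, hql, hq⟩⟩).2 hq
    exact hl₀ (hll₀ ▸ hal)
  have card1 : Nat.card {l : {l : L // I a l} // pr l} = m :=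
    (Nat.card_eq_of_bijective F ⟨hinj, hsurj⟩).trans (haord l₀)
  have card2 : Nat.card {l : {l : L // I a l} // ¬ pr l} = 1 := by
    obtain ⟨g, ⟨hag, hdis⟩, hguniq⟩ := hA.playfair a l₀ hl₀
    refine Nat.card_eq_one_iff_unique.mpr ⟨⟨?_⟩, ⟨⟨⟨g, hag⟩, ?_⟩⟩⟩
    · rintro ⟨⟨x, hax⟩, hx⟩ ⟨⟨y, hay⟩, hy⟩
      have ex : x = g := hguniq x ⟨hax, fun q hq => hx ⟨q, hq.2, hq.1⟩⟩
      have ey : y = g := hguniq y ⟨hay, fun q hq => hy ⟨q, hq.2, hq.1⟩⟩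
      exact Subtype.ext (Subtype.ext (ex.trans ey.symm))
    · rintro ⟨q, h1, h2⟩
      exact hdis q ⟨h2, h1⟩
  have hfin1 : Finite {l : {l : L // I a l} // pr l} := Finite.of_injective F hinj
  have hfin2 : Finite {l : {l : L // I a l} // ¬ pr l} :=
    card_finite card2 le_rfl
  have : Nat.card {l : L // I a l} =
      Nat.card {l : {l : L // I a l} // pr l} + Nat.card {l : {l : L // I a l} // ¬ pr l} := by
    rw [← Nat.card_sum]
    exact Nat.card_congr (Equiv.sumCompl pr).symm
  omega

lemma IsAffinePlane.class_card (hA : IsAffinePlane I) (haord : AffOrder I m) (hm : 1 ≤ m) :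
    Nat.card {Cl : Set L // IsParallelClass I Cl} = m + 1 := by
  obtain ⟨a, -, -, -, -⟩ := hA.nondeg
  set G : {l : L // I a l} → {Cl : Set L // IsParallelClass I Cl} :=
    fun l => ⟨{k : L | Parallel I l.1 k}, l.1, rfl⟩ with hG
  have hinj : Function.Injective G := by
    intro l₁ l₂ h
    have hs : {k : L | Parallel I l₁.1 k} = {k : L | Parallel I l₂.1 k} :=
      congrArg Subtype.val h
    have hpar : Parallel I l₁.1 l₂.1 := by
      have : l₂.1 ∈ {k : L | Parallel I l₂.1 k} := Or.inl rfl
      rw [← hs] at this; exact this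
    rcases hpar with he | hd
    · exact Subtype.ext he
    · exact absurd ⟨l₁.2, l₂.2⟩ (hd a)
  have hsurj : Function.Surjective G := by
    rintro ⟨Cl, hCl⟩
    obtain ⟨l, hlCl, hal⟩ := hA.exists_mem_class_through hCl a
    refine ⟨⟨l, hal⟩, Subtype.ext ?_⟩
    exact hA.class_eq_of_mem ⟨l, rfl⟩ hCl (Or.inl rfl) hlCl
  exact (Nat.card_eq_of_bijective G ⟨hinj, hsurj⟩).symm.trans
    (hA.lines_through_card haord hm a)

end Cards

section OA

variable {R Col S : Type} {F : R → Col → S}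

lemma oa_col_surj (hoa : IsOrthArray2 F) [Nonempty S] {c c' : Col} (hne : c' ≠ c)
    (s : S) : ∃ r, F r c = s := by
  obtain ⟨r, hr⟩ := (hoa c c' (fun e => hne e.symm)).surjective (s, Classical.arbitrary S)
  exact ⟨r, congrArg Prod.fst hr⟩

lemma oa_col_count (hoa : IsOrthArray2 F) {c c' : Col} (hne : c ≠ c') (s : S) :
    Nat.card {r : R // F r c = s} = Nat.card S := by
  have e1 : {r : R // F r c = s} ≃ {t : S × S // t.1 = s} :=
    (Equiv.ofBijective _ (hoa c c' hne)).subtypeEquiv (fun r => Iff.rfl)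
  have e2 : {t : S × S // t.1 = s} ≃ S :=
    ⟨fun t => t.1.2, fun b => ⟨(s, b), rfl⟩, by rintro ⟨⟨t1, t2⟩, rfl⟩; rfl, fun b => rfl⟩
  exact Nat.card_congr (e1.trans e2)

lemma oa_rows_agree (hoa : IsOrthArray2 F) {m : ℕ} (hm : 2 ≤ m)
    (hR : Nat.card R = m ^ 2) (hCol : Nat.card Col = m + 1) (hS : Nat.card S = m)
    (r r' : R) : ∃ c : Col, F r c = F r' c := by
  classical
  have hfinR : Finite R := card_finite hR (by nlinarith)
  have hfinCol : Finite Col := card_finite hCol (by omega)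
  have hfinS : Finite S := card_finite hS (by omega)
  have hneCol : Nonempty Col := card_nonempty hCol (by omega)
  by_cases hrr : r' = r
  · obtain ⟨c⟩ := hneCol
    exact ⟨c, hrr ▸ rfl⟩
  -- counting argument
  set T : Col → Type := fun c => {x : R // F x c = F r c ∧ x ≠ r} with hT
  have hTcard : ∀ c : Col, Nat.card (T c) = m - 1 := by
    intro c
    obtain ⟨c', hc'⟩ := exists_ne_of_card hCol (by omega) c
    have e3 : T c ≃ {x : {y : R // F y c = F r c} // x ≠ ⟨r, rfl⟩} :=
      ⟨fun y => ⟨⟨y.1, y.2.1⟩, fun e => y.2.2 (congrArg Subtype.val e)⟩,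
       fun x => ⟨x.1.1, x.1.2, fun e => x.2 (Subtype.ext e)⟩,
       fun y => rfl, fun x => rfl⟩
    have hfin : Finite {y : R // F y c = F r c} := Subtype.finite
    rw [Nat.card_congr e3, card_ne, oa_col_count hoa (fun e => hc' e.symm), hS]
  set Φ : (Σ c : Col, T c) → {x : R // x ≠ r} := fun y => ⟨y.2.1, y.2.2.2⟩ with hΦ
  have hinj : Function.Injective Φ := by
    rintro ⟨c₁, x₁⟩ ⟨c₂, x₂⟩ h
    have hx : x₁.1 = x₂.1 := congrArg Subtype.val h
    by_cases hc : c₁ = c₂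
    · subst hc
      exact congrArg (Sigma.mk c₁) (Subtype.ext hx)
    · exfalso
      have hpair : (F x₁.1 c₁, F x₁.1 c₂) = (F r c₁, F r c₂) := by
        rw [Prod.ext_iff]
        exact ⟨x₁.2.1, hx ▸ x₂.2.1⟩
      exact x₁.2.2 ((hoa c₁ c₂ hc).injective hpair)
  have hcard : Nat.card (Σ c : Col, T c) = Nat.card {x : R // x ≠ r} := by
    have hF : ∀ c : Col, Finite (T c) := fun c => Subtype.finite
    have : Fintype Col := Fintype.ofFinite Col
    have : ∀ c : Col, Fintype (T c) := fun c => Fintype.ofFinite (T c)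
    rw [Nat.card_eq_fintype_card, Fintype.card_sigma, card_ne, hR]
    have : ∀ c : Col, Fintype.card (T c) = m - 1 := fun c =>
      (Nat.card_eq_fintype_card).symm.trans (hTcard c)
    rw [Finset.sum_congr rfl (fun c _ => this c), Finset.sum_const, Finset.card_univ,
      ← Nat.card_eq_fintype_card, hCol, smul_eq_mul]
    obtain ⟨k, rfl⟩ : ∃ k, m = k + 2 := ⟨m - 2, by omega⟩
    have h1 : (k + 2) ^ 2 = k * k + 4 * k + 4 := by ring
    have h2 : (k + 2 + 1) * (k + 2 - 1) = k * k + 4 * k + 3 := by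
      have e : k + 2 - 1 = k + 1 := by omega
      rw [e]; ring
    omega
  have hbij : Function.Bijective Φ :=
    (Nat.bijective_iff_injective_and_card Φ).mpr ⟨hinj, hcard⟩
  obtain ⟨⟨c, x⟩, hx⟩ := hbij.surjective ⟨r', hrr⟩
  have : x.1 = r' := congrArg Subtype.val hx
  exact ⟨c, (this ▸ x.2.1).symm⟩

end OA

section Transfer

variable {P L : Type} {I : P → L → Prop}

lemma IsAffinePlane.par_of_same_class (hA : IsAffinePlane I) {Cl : Set L}
    (hC : IsParallelClass I Cl) {l₁ l₂ : L} (h1 : l₁ ∈ Cl) (h2 : l₂ ∈ Cl) :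
    Parallel I l₁ l₂ := by
  obtain ⟨g, rfl⟩ := hC
  exact hA.parallel_trans (IsAffinePlane.parallel_symm h1) h2

lemma IsAffinePlane.mem_class_of_parallel (hA : IsAffinePlane I) {Cl : Set L}
    (hC : IsParallelClass I Cl) {l₁ l₂ : L} (h1 : l₁ ∈ Cl) (hp : Parallel I l₁ l₂) :
    l₂ ∈ Cl := by
  obtain ⟨g, rfl⟩ := hC
  exact hA.parallel_trans h1 hp

lemma IsAffinePlane.transfer {P' L' : Type} {I' : P' → L' → Prop}
    (hA : IsAffinePlane I) (eP : P ≃ P') (eL : L ≃ L')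
    (hI : ∀ p l, I p l ↔ I' (eP p) (eL l)) : IsAffinePlane I' := by
  have hI' : ∀ (p' : P') (l' : L'), I' p' l' ↔ I (eP.symm p') (eL.symm l') := by
    intro p' l'
    rw [hI (eP.symm p') (eL.symm l'), Equiv.apply_symm_apply, Equiv.apply_symm_apply]
  constructor
  · intro p q hpq
    have hpq' : eP.symm p ≠ eP.symm q := fun e => hpq (eP.symm.injective e)
    obtain ⟨l, ⟨h1, h2⟩, hu⟩ := hA.point_line _ _ hpq'
    refine ⟨eL l, ⟨?_, ?_⟩, ?_⟩
    · rw [hI' p (eL l), Equiv.symm_apply_apply]; exact h1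
    · rw [hI' q (eL l), Equiv.symm_apply_apply]; exact h2
    · rintro l'' ⟨h1'', h2''⟩
      have : eL.symm l'' = l := hu _ ⟨(hI' p l'').1 h1'', (hI' q l'').1 h2''⟩
      rw [← this, Equiv.apply_symm_apply]
  · intro p l hnpl
    have hnpl' : ¬ I (eP.symm p) (eL.symm l) := fun h => hnpl ((hI' p l).2 h)
    obtain ⟨g, ⟨h1, h2⟩, hu⟩ := hA.playfair _ _ hnpl'
    refine ⟨eL g, ⟨?_, ?_⟩, ?_⟩
    · rw [hI' p (eL g), Equiv.symm_apply_apply]; exact h1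
    · intro q hq
      exact h2 (eP.symm q) ⟨(hI' q l).1 hq.1, by
        rw [hI (eP.symm q) g, Equiv.apply_symm_apply]; exact hq.2⟩
    · rintro g'' ⟨h1'', h2''⟩
      have : eL.symm g'' = g := by
        refine hu _ ⟨(hI' p g'').1 h1'', ?_⟩
        intro q hq
        refine h2'' (eP q) ⟨?_, ?_⟩
        · have := (hI q (eL.symm l)).1 hq.1
          rwa [Equiv.apply_symm_apply] at this
        · have := (hI q (eL.symm g'')).1 hq.2
          rwa [Equiv.apply_symm_apply] at this
      rw [← this, Equiv.apply_symm_apply]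
  · obtain ⟨a, b, c, hab, hac, hbc, hcol⟩ := hA.nondeg
    refine ⟨eP a, eP b, eP c, fun e => hab (eP.injective e), fun e => hac (eP.injective e),
      fun e => hbc (eP.injective e), ?_⟩
    intro l' hl'
    refine hcol (eL.symm l') ⟨?_, ?_, ?_⟩
    · have := (hI' _ _).1 hl'.1; rwa [Equiv.symm_apply_apply] at this
    · have := (hI' _ _).1 hl'.2.1; rwa [Equiv.symm_apply_apply] at this
    · have := (hI' _ _).1 hl'.2.2; rwa [Equiv.symm_apply_apply] at this

end Transfer

namespace PHData

variable {m : ℕ} (D : PHData m)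

lemma apt_nonempty (p : D.Pt) : Nonempty (D.APt p) := by
  obtain ⟨a, -⟩ := (D.aff p).nondeg
  exact ⟨a⟩

lemma sym_nonempty (hm : 1 ≤ m) (l : D.Ln) : Nonempty (D.Sym l) :=
  card_nonempty (D.sym_card l) hm

lemma row_nonempty (hm : 1 ≤ m) (l : D.Ln) : Nonempty (D.Row l) :=
  card_nonempty (D.row_card l) (by nlinarith)

lemma col_surj (hm : 2 ≤ m) (l : D.Ln) (c : {p : D.Pt // D.I p l}) (s : D.Sym l) :
    ∃ r : D.Row l, D.O l r c = s := by
  have : Nonempty (D.Sym l) := D.sym_nonempty (by omega) l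
  obtain ⟨c', hc'⟩ := exists_ne_of_card (D.ord l) (by omega) c
  exact oa_col_surj (D.oa l) hc' s

lemma col_count (hm : 2 ≤ m) (l : D.Ln) (c : {p : D.Pt // D.I p l}) (s : D.Sym l) :
    Nat.card {r : D.Row l // D.O l r c = s} = m := by
  obtain ⟨c', hc'⟩ := exists_ne_of_card (D.ord l) (by omega) c
  exact (oa_col_count (D.oa l) (fun e => hc' e.symm) s).trans (D.sym_card l)

lemma rows_agree (hm : 2 ≤ m) (l : D.Ln) (r r' : D.Row l) :
    ∃ c : {p : D.Pt // D.I p l}, D.O l r c = D.O l r' c :=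
  oa_rows_agree (D.oa l) hm (D.row_card l) (D.ord l) (D.sym_card l) r r'

lemma symbol_through (p : D.Pt) (l : D.Ln) (h : D.I p l) (a : D.APt p) :
    ∃ s : D.Sym l, D.AI p a (D.C p l h s) := by
  obtain ⟨ℓ, hℓmem, hℓa⟩ := (D.aff p).exists_mem_class_through (D.C_class p l h) a
  obtain ⟨s, rfl⟩ := hℓmem
  exact ⟨s, hℓa⟩

lemma line_eq_of_C_eq {p : D.Pt} {l₁ l₂ : D.Ln} {h₁ : D.I p l₁} {h₂ : D.I p l₂}
    {s₁ : D.Sym l₁} {s₂ : D.Sym l₂} (he : D.C p l₁ h₁ s₁ = D.C p l₂ h₂ s₂) :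
    l₁ = l₂ := by
  by_contra hne
  refine D.C_distinct p l₁ l₂ h₁ h₂ hne ?_
  exact (D.aff p).class_eq_of_mem (D.C_class p l₁ h₁) (D.C_class p l₂ h₂)
    (Set.mem_range_self s₁) (he ▸ Set.mem_range_self s₂)

lemma class_surj (hm : 2 ≤ m) (p : D.Pt) (ℓ : D.ALn p) :
    ∃ (l : D.Ln) (h : D.I p l) (s : D.Sym l), D.C p l h s = ℓ := by
  set F : {l : D.Ln // D.I p l} → {Cl : Set (D.ALn p) // IsParallelClass (D.AI p) Cl} :=
    fun l => ⟨Set.range (D.C p l.1 l.2), D.C_class p l.1 l.2⟩ with hF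
  have hinj : Function.Injective F := by
    intro l₁ l₂ h
    by_contra hne
    exact D.C_distinct p l₁.1 l₂.1 l₁.2 l₂.2 (fun e => hne (Subtype.ext e))
      (congrArg Subtype.val h)
  have hfin : Finite {Cl : Set (D.ALn p) // IsParallelClass (D.AI p) Cl} :=
    card_finite ((D.aff p).class_card (D.aord p) (by omega)) (by omega)
  have hcard : Nat.card {l : D.Ln // D.I p l} =
      Nat.card {Cl : Set (D.ALn p) // IsParallelClass (D.AI p) Cl} := by
    rw [D.proj.lines_through_card D.ord p, (D.aff p).class_card (D.aord p) (by omega)]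
  have hbij : Function.Bijective F :=
    (Nat.bijective_iff_injective_and_card F).mpr ⟨hinj, hcard⟩
  obtain ⟨l, hl⟩ := hbij.surjective ⟨{k : D.ALn p | Parallel (D.AI p) ℓ k}, ℓ, rfl⟩
  have : ℓ ∈ Set.range (D.C p l.1 l.2) := by
    have hmem : ℓ ∈ {k : D.ALn p | Parallel (D.AI p) ℓ k} := Or.inl rfl
    have := congrArg Subtype.val hl
    rw [hF] at this
    simp only at this
    rw [this]
    exact hmem
  obtain ⟨s, hs⟩ := this
  exact ⟨l.1, l.2, s, hs⟩

end PHData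

namespace PHData

variable {m : ℕ} (D : PHData m)

lemma main_PH (hm : 2 ≤ m) :
    IsPHPlaneWith D.HI D.nPt D.nLn D.I (fun x => x.1) (fun g => g.1) := by
  refine { nP_equiv := ⟨fun x => rfl, fun h => h.symm, fun h1 h2 => h1.trans h2⟩,
           nL_equiv := ⟨fun x => rfl, fun h => h.symm, fun h1 h2 => h1.trans h2⟩,
           target_proj := D.proj,
           nP_iff := fun _ _ => Iff.rfl, nL_iff := fun _ _ => Iff.rfl,
           join := ?_, meet := ?_, line_nbr := ?_, point_nbr := ?_,
           φP_surj := ?_, φL_surj := ?_, incid_pres := ?_ }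
  · -- join
    rintro ⟨p, a⟩ ⟨q, b⟩
    by_cases hpq : p = q
    · subst hpq
      have hab : ∃ ℓ : D.ALn p, D.AI p a ℓ ∧ D.AI p b ℓ := by
        by_cases hab : a = b
        · subst hab
          obtain ⟨ℓ, hℓ⟩ := (D.aff p).exists_line_through a
          exact ⟨ℓ, hℓ, hℓ⟩
        · obtain ⟨ℓ, hℓ, -⟩ := (D.aff p).point_line a b hab
          exact ⟨ℓ, hℓ⟩
      obtain ⟨ℓ, ha, hb⟩ := hab
      obtain ⟨l, h, s, hs⟩ := D.class_surj hm p ℓ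
      obtain ⟨r, hr⟩ := D.col_surj hm l ⟨p, h⟩ s
      exact ⟨⟨l, r⟩, ⟨h, by rw [hr, hs]; exact ha⟩, ⟨h, by rw [hr, hs]; exact hb⟩⟩
    · obtain ⟨l, ⟨h₁, h₂⟩, -⟩ := D.proj.point_line p q hpq
      obtain ⟨s₁, hs₁⟩ := D.symbol_through p l h₁ a
      obtain ⟨s₂, hs₂⟩ := D.symbol_through q l h₂ b
      have hcne : (⟨p, h₁⟩ : {x : D.Pt // D.I x l}) ≠ ⟨q, h₂⟩ :=
        fun e => hpq (congrArg Subtype.val e)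
      obtain ⟨r, hr⟩ := (D.oa l ⟨p, h₁⟩ ⟨q, h₂⟩ hcne).surjective (s₁, s₂)
      have hr1 : D.O l r ⟨p, h₁⟩ = s₁ := congrArg Prod.fst hr
      have hr2 : D.O l r ⟨q, h₂⟩ = s₂ := congrArg Prod.snd hr
      exact ⟨⟨l, r⟩, ⟨h₁, by rw [hr1]; exact hs₁⟩, ⟨h₂, by rw [hr2]; exact hs₂⟩⟩
  · -- meet
    rintro ⟨l₁, r₁⟩ ⟨l₂, r₂⟩
    by_cases hll : l₁ = l₂
    · subst hll
      obtain ⟨c, hc⟩ := D.rows_agree hm l₁ r₁ r₂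
      obtain ⟨⟨a, ha⟩⟩ :=
        card_nonempty (D.aord c.1 (D.C c.1 l₁ c.2 (D.O l₁ r₁ c))) (by omega)
      refine ⟨⟨c.1, a⟩, ⟨c.2, ?_⟩, ⟨c.2, ?_⟩⟩
      · exact ha
      · show D.AI c.1 a (D.C c.1 l₁ c.2 (D.O l₁ r₂ c))
        rw [← hc]; exact ha
    · obtain ⟨p, ⟨h₁, h₂⟩, -⟩ := D.proj.line_point l₁ l₂ hll
      set ℓ₁ := D.C p l₁ h₁ (D.O l₁ r₁ ⟨p, h₁⟩) with hℓ₁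
      set ℓ₂ := D.C p l₂ h₂ (D.O l₂ r₂ ⟨p, h₂⟩) with hℓ₂
      have hnp : ¬ Parallel (D.AI p) ℓ₁ ℓ₂ := by
        intro hp
        refine D.C_distinct p l₁ l₂ h₁ h₂ hll ?_
        refine (D.aff p).class_eq_of_mem (l := ℓ₂) (D.C_class p l₁ h₁)
          (D.C_class p l₂ h₂) ?_ ⟨D.O l₂ r₂ ⟨p, h₂⟩, rfl⟩
        exact (D.aff p).mem_class_of_parallel (D.C_class p l₁ h₁)
          ⟨D.O l₁ r₁ ⟨p, h₁⟩, rfl⟩ hp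
      have hex : ∃ a, D.AI p a ℓ₁ ∧ D.AI p a ℓ₂ := by
        by_contra hno
        push_neg at hno
        exact hnp (Or.inr fun q hq => (hno q hq.1) hq.2)
      obtain ⟨a, ha₁, ha₂⟩ := hex
      exact ⟨⟨p, a⟩, ⟨h₁, ha₁⟩, ⟨h₂, ha₂⟩⟩
  · -- line_nbr
    rintro ⟨l₁, r₁⟩ ⟨l₂, r₂⟩
      ⟨⟨p, a⟩, ⟨q, b⟩, hxy, ⟨hg1, ha1⟩, ⟨hh1, ha2⟩, ⟨hg2, hb1⟩, ⟨hh2, hb2⟩⟩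
    show l₁ = l₂
    by_contra hll
    have hpq : p = q := by
      by_contra hpq
      obtain ⟨z, -, hz⟩ := D.proj.line_point l₁ l₂ hll
      exact hpq ((hz p ⟨hg1, hh1⟩).trans (hz q ⟨hg2, hh2⟩).symm)
    subst hpq
    have hab : a ≠ b := fun e => hxy (by rw [e])
    have hline : D.C p l₁ hg1 (D.O l₁ r₁ ⟨p, hg1⟩) = D.C p l₂ hh1 (D.O l₂ r₂ ⟨p, hh1⟩) :=
      line_eq_of_two_points (D.aff p).point_line hab ha1 hb1 ha2 hb2
    exact hll (D.line_eq_of_C_eq hline)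
  · -- point_nbr
    rintro ⟨p, a⟩ ⟨q, b⟩
      ⟨⟨l₁, r₁⟩, ⟨l₂, r₂⟩, hgh, ⟨h1, ha1⟩, ⟨h2, hb1⟩, ⟨h3, ha2⟩, ⟨h4, hb2⟩⟩
    show p = q
    by_contra hpq
    have hll : l₁ = l₂ := by
      by_contra hll
      obtain ⟨z, -, hz⟩ := D.proj.line_point l₁ l₂ hll
      exact hpq ((hz p ⟨h1, h3⟩).trans (hz q ⟨h2, h4⟩).symm)
    subst hll
    have hrr : r₁ ≠ r₂ := fun e => hgh (by rw [e])
    have hsp : D.O l₁ r₁ ⟨p, h1⟩ = D.O l₁ r₂ ⟨p, h1⟩ := by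
      by_contra hs
      have hpar : Parallel (D.AI p) (D.C p l₁ h1 (D.O l₁ r₁ ⟨p, h1⟩))
          (D.C p l₁ h1 (D.O l₁ r₂ ⟨p, h1⟩)) :=
        (D.aff p).par_of_same_class (D.C_class p l₁ h1)
          (Set.mem_range_self _) (Set.mem_range_self _)
      rcases hpar with he | hd
      · exact hs (D.C_inj p l₁ h1 he)
      · exact hd a ⟨ha1, ha2⟩
    have hsq : D.O l₁ r₁ ⟨q, h2⟩ = D.O l₁ r₂ ⟨q, h2⟩ := by
      by_contra hs
      have hpar : Parallel (D.AI q) (D.C q l₁ h2 (D.O l₁ r₁ ⟨q, h2⟩))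
          (D.C q l₁ h2 (D.O l₁ r₂ ⟨q, h2⟩)) :=
        (D.aff q).par_of_same_class (D.C_class q l₁ h2)
          (Set.mem_range_self _) (Set.mem_range_self _)
      rcases hpar with he | hd
      · exact hs (D.C_inj q l₁ h2 he)
      · exact hd b ⟨hb1, hb2⟩
    have hcne : (⟨p, h1⟩ : {x : D.Pt // D.I x l₁}) ≠ ⟨q, h2⟩ :=
      fun e => hpq (congrArg Subtype.val e)
    refine hrr ((D.oa l₁ ⟨p, h1⟩ ⟨q, h2⟩ hcne).injective ?_)
    rw [Prod.ext_iff]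
    exact ⟨hsp, hsq⟩
  · exact fun p => ⟨⟨p, Classical.choice (D.apt_nonempty p)⟩, rfl⟩
  · exact fun l => ⟨⟨l, Classical.choice (D.row_nonempty (by omega) l)⟩, rfl⟩
  · rintro ⟨p, a⟩ ⟨l, r⟩ ⟨h, -⟩
    exact h

lemma main_nbrs : NbrsOnLines D.HI D.nPt m := by
  rintro ⟨l, r⟩ ⟨p, a⟩ ⟨h, ha⟩
  set ℓ := D.C p l h (D.O l r ⟨p, h⟩) with hℓ
  set f : {b : D.APt p // D.AI p b ℓ} →
      {y : D.HPt // D.HI y ⟨l, r⟩ ∧ D.nPt ⟨p, a⟩ y} :=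
    fun b => ⟨⟨p, b.1⟩, ⟨h, b.2⟩, rfl⟩ with hf
  have hinj : Function.Injective f := by
    intro b₁ b₂ he
    exact Subtype.ext (sigma_mk_injective (congrArg Subtype.val he))
  have hsurj : Function.Surjective f := by
    rintro ⟨⟨q, b⟩, ⟨h', hb⟩, (he : p = q)⟩
    subst he
    exact ⟨⟨b, hb⟩, rfl⟩
  exact (Nat.card_eq_of_bijective f ⟨hinj, hsurj⟩).symm.trans (D.aord p ℓ)

end PHData

namespace PHData

variable {m : ℕ} (D : PHData m)

lemma main_two (hm : 2 ≤ m) : TwoUniform D.HI D.nPt := by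
  rintro ⟨p, a₀⟩
  set S : D.ALn p → Set D.HPt := fun ℓ => Sigma.mk p '' {b : D.APt p | D.AI p b ℓ}
    with hS
  have hSmem : ∀ (ℓ : D.ALn p) (b : D.APt p), (⟨p, b⟩ : D.HPt) ∈ S ℓ ↔ D.AI p b ℓ := by
    intro ℓ b
    constructor
    · rintro ⟨b', hb', heq⟩
      have := sigma_mk_injective heq
      rwa [← this]
    · exact fun hb => ⟨b, hb, rfl⟩
  have hres : ∀ (g : D.HLn) (h : D.I p g.1),
      {q : D.HPt | D.nPt q ⟨p, a₀⟩ ∧ D.HI q g} = S (D.C p g.1 h (D.O g.1 g.2 ⟨p, h⟩)) := by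
    intro g h
    ext ⟨q, b⟩
    constructor
    · rintro ⟨(he : q = p), h', hb⟩
      subst he
      exact (hSmem _ b).2 hb
    · rintro ⟨b', hb', heq⟩
      cases heq
      exact ⟨rfl, h, hb'⟩
  have hresE : ∀ g : D.HLn, ¬ D.I p g.1 →
      {q : D.HPt | D.nPt q ⟨p, a₀⟩ ∧ D.HI q g} = ∅ := by
    intro g hn
    ext ⟨q, b⟩
    refine iff_of_false ?_ (Set.notMem_empty _)
    rintro ⟨(he : q = p), h', -⟩
    subst he
    exact hn h'
  have hSne : ∀ ℓ : D.ALn p, (S ℓ).Nonempty := by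
    intro ℓ
    obtain ⟨⟨b, hb⟩⟩ := card_nonempty (D.aord p ℓ) (by omega)
    exact ⟨⟨p, b⟩, b, hb, rfl⟩
  have hSinj : Function.Injective S := by
    intro ℓ₁ ℓ₂ he
    obtain ⟨⟨b₁, h1⟩, ⟨b₂, h2⟩, hne⟩ := card_two_exists (D.aord p ℓ₁) hm
    have hb : b₁ ≠ b₂ := fun e => hne (Subtype.ext e)
    have h1' : D.AI p b₁ ℓ₂ := (hSmem ℓ₂ b₁).1 (he ▸ (hSmem ℓ₁ b₁).2 h1)
    have h2' : D.AI p b₂ ℓ₂ := (hSmem ℓ₂ b₂).1 (he ▸ (hSmem ℓ₁ b₂).2 h2)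
    exact line_eq_of_two_points (D.aff p).point_line hb h1 h2 h1' h2'
  have hreal : ∀ ℓ : D.ALn p, ∃ g : D.HLn,
      {q : D.HPt | D.nPt q ⟨p, a₀⟩ ∧ D.HI q g} = S ℓ := by
    intro ℓ
    obtain ⟨l, h, s, hs⟩ := D.class_surj hm p ℓ
    obtain ⟨r, hr⟩ := D.col_surj hm l ⟨p, h⟩ s
    exact ⟨⟨l, r⟩, by rw [hres ⟨l, r⟩ h, hr, hs]⟩
  set fS : D.ALn p → ↥(NbrLines D.HI D.nPt ⟨p, a₀⟩) := fun ℓ =>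
    ⟨S ℓ, hSne ℓ, by obtain ⟨g, hg⟩ := hreal ℓ; exact ⟨g, hg.symm⟩⟩ with hfS
  have hfbij : Function.Bijective fS := by
    constructor
    · intro ℓ₁ ℓ₂ h
      exact hSinj (congrArg Subtype.val h)
    · rintro ⟨s, hne, g, rfl⟩
      by_cases h : D.I p g.1
      · exact ⟨D.C p g.1 h (D.O g.1 g.2 ⟨p, h⟩), Subtype.ext (hres g h).symm⟩
      · rw [hresE g h] at hne
        exact absurd hne Set.not_nonempty_empty
  constructor
  · -- affine plane
    set eP : D.APt p ≃ {q : D.HPt // D.nPt q ⟨p, a₀⟩} :=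
      { toFun := fun b => ⟨⟨p, b⟩, rfl⟩,
        invFun := fun q => (show (q : D.HPt).1 = p from q.2) ▸ (q : D.HPt).2,
        left_inv := fun b => rfl,
        right_inv := by rintro ⟨⟨q, b⟩, (he : q = p)⟩; subst he; rfl } with heP
    set eL : D.ALn p ≃ ↥(NbrLines D.HI D.nPt ⟨p, a₀⟩) := Equiv.ofBijective fS hfbij
      with heL
    refine (D.aff p).transfer eP eL ?_
    intro b ℓ
    exact ((hSmem ℓ b).symm)
  · -- uniform count
    refine ⟨m, fun s => ?_⟩
    obtain ⟨ℓ, hℓ⟩ := hfbij.surjective s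
    have hsval : (s : Set D.HPt) = S ℓ := (congrArg Subtype.val hℓ).symm
    rw [hsval]
    obtain ⟨l₀, h₀, s₀, hC⟩ := D.class_surj hm p ℓ
    set u : {r : D.Row l₀ // D.O l₀ r ⟨p, h₀⟩ = s₀} →
        {g : D.HLn // {q : D.HPt | D.nPt q ⟨p, a₀⟩ ∧ D.HI q g} = S ℓ} :=
      fun r => ⟨⟨l₀, r.1⟩, by rw [hres ⟨l₀, r.1⟩ h₀]; rw [show D.O l₀ r.1 ⟨p, h₀⟩ = s₀ from r.2, hC]⟩
      with hu
    have huinj : Function.Injective u := by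
      intro r₁ r₂ he
      exact Subtype.ext (sigma_mk_injective (congrArg Subtype.val he))
    have husurj : Function.Surjective u := by
      rintro ⟨⟨l, r⟩, hset⟩
      have hI : D.I p l := by
        by_contra hn
        rw [hresE ⟨l, r⟩ hn] at hset
        exact Set.not_nonempty_empty (hset ▸ hSne ℓ)
      have hCeq : D.C p l hI (D.O l r ⟨p, hI⟩) = ℓ :=
        hSinj ((hres ⟨l, r⟩ hI).symm.trans hset)
      have hl : l = l₀ := D.line_eq_of_C_eq (hCeq.trans hC.symm)
      subst hl
      have hs0 : D.O l r ⟨p, hI⟩ = s₀ := D.C_inj p l hI (hCeq.trans hC.symm)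
      exact ⟨⟨r, hs0⟩, Subtype.ext rfl⟩
    exact (Nat.card_eq_of_bijective u ⟨huinj, husurj⟩).symm.trans
      (D.col_count hm l₀ ⟨p, h₀⟩ s₀)

end PHData

/-- For `m ≥ 2`, the structure `ℋ` produced by the Hjelmslev construction,
with point-neighbour relation "same first coordinate", line-neighbour relation "same first
coordinate", and quotient maps the first projections, is a 2-uniform `(m, m)` projective
Hjelmslev plane. -/
theorem hjelmslev_construction_is_2uniform_PH_plane (m : ℕ) (hm : 2 ≤ m) (D : PHData m) :
    IsPHPlaneWith D.HI D.nPt D.nLn D.I (fun x => x.1) (fun g => g.1) ∧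
    NbrsOnLines D.HI D.nPt m ∧ ProjOrder D.I m ∧
    TwoUniform D.HI D.nPt := by
  exact ⟨D.main_PH hm, D.main_nbrs, D.ord, D.main_two hm⟩
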